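/- Let Q be a set of entailments satisfying EP-1, EP-4, and EP-5. If p ⊢ ᾱ[a] ∈ Q and q is a Q-preantecedent with p ⊑ q and p_α = q_α, then q ⊢ ᾱ[a] ∈ Q. -/

import Mathlib

/-!
STATEMENT 10: if `Q` satisfies EP-1, EP-4 and EP-5, `p ⊢ ᾱ[a] ∈ Q`, and `q` is
a `Q`-preantecedent with `p ⊑ q` and `p α = q α`, then `q ⊢ ᾱ[a] ∈ Q`.
-/

namespace Stmt10

/-- Protocols over a set of atoms `At`: atoms, coproducts and products of
finite families (events are represented by positions in the list). -/
inductive Proto (At : Type) : Type where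
  | atom : At → Proto At
  | sum : List (Proto At) → Proto At
  | prod : List (Proto At) → Proto At

/-- The three roles a protocol state may have. -/
inductive Role : Type where
  | src  -- source role 0
  | snk  -- sink role 1
  | flow -- flow role +
deriving DecidableEq

/-- Interchanging the source and sink roles. -/
def Role.swap : Role → Role
  | .src => .snk
  | .snk => .src
  | .flow => .flow

/-- The role of a coproduct state, from the roles of its components. -/
def sumRole (rs : List Role) : Role :=
  if ∀ r ∈ rs, r = Role.src then .src
  else if rs.count Role.snk = 1 ∧ rs.count Role.flow = 0 then .snk
  else .flow

/-- The role of a product state, from the roles of its components. -/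
def prodRole (rs : List Role) : Role :=
  if ∀ r ∈ rs, r = Role.snk then .snk
  else if rs.count Role.src = 1 ∧ rs.count Role.flow = 0 then .src
  else .flow

mutual
/-- The role of a protocol state on a domain channel. -/
def roleD {At : Type} : Proto At → Role
  | .atom _ => .flow
  | .sum Xs => sumRole (rolesD Xs)
  | .prod Xs => prodRole (rolesD Xs)

def rolesD {At : Type} : List (Proto At) → List Role
  | [] => []
  | X :: Xs => roleD X :: rolesD Xs
end

/-- A channel is either a domain channel or a codomain channel. -/
inductive Side : Type where
  | dom
  | cod
deriving DecidableEq

/-- The role of a protocol state on a channel of the given side (codomain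
roles are computed dually). -/
def role {At : Type} : Side → Proto At → Role
  | .dom, X => roleD X
  | .cod, X => (roleD X).swap

/-- Directions of events: input or output. -/
inductive Dir : Type where
  | inp
  | out
deriving DecidableEq

def Dir.flip : Dir → Dir
  | .inp => .out
  | .out => .inp

/-- An event: a direction together with the position of the selected
component. -/
abbrev Ev : Type := Dir × ℕ

/-- The subprotocol reached by a transition along event `i`. -/
def Proto.next {At : Type} : Proto At → ℕ → Option (Proto At)
  | .atom _, _ => none
  | .sum Xs, i => Xs[i]?
  | .prod Xs, i => Xs[i]?

/-- The direction of events a protocol state expects, on a channel of the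
given side (coproducts expect inputs on domain channels and outputs on
codomain channels; products dually). -/
def expects {At : Type} (s : Side) : Proto At → Option Dir
  | .sum _ => some (match s with | .dom => .inp | .cod => .out)
  | .prod _ => some (match s with | .dom => .out | .cod => .inp)
  | .atom _ => none

/-- A legal transition of a protocol state on a channel of side `s`: it starts
at a state with flow role, has the direction the state expects, and an output
transition does not end at a sink-role state while an input transition does
not end at a source-role state. -/
def StepP {At : Type} (s : Side) (P : Proto At) (e : Ev) (P' : Proto At) : Prop :=
  role s P = .flow ∧ expects s P = some e.1 ∧ P.next e.2 = some P' ∧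
    (e.1 = Dir.out → role s P' ≠ .snk) ∧ (e.1 = Dir.inp → role s P' ≠ .src)

/-- A legal channel behaviour: a finite sequence of legal transitions,
reaching the indicated state. -/
inductive StepsP {At : Type} (s : Side) : Proto At → List Ev → Proto At → Prop where
  | nil (P : Proto At) : StepsP s P [] P
  | cons {P P' P'' : Proto At} {e : Ev} {l : List Ev} :
      StepP s P e P' → StepsP s P' l P'' → StepsP s P (e :: l) P''

def Proto.IsAtom {At : Type} : Proto At → Prop
  | .atom _ => True
  | _ => False

/-- A finite family of channels, each assigned a protocol and partitioned
into domain channels and codomain channels. -/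
structure Setting (At Chan : Type) where
  active : Set Chan
  finite : active.Finite
  side : Chan → Side
  proto : Chan → Proto At

/-- A behaviour: a tuple of channel behaviours, one per channel. -/
abbrev Behav (Chan : Type) : Type := Chan → List Ev

variable {At Chan M : Type}

/-- The behaviour `p` reaches the frontier state `P` on channel `c`. -/
def Setting.Reaches (S : Setting At Chan) (p : Behav Chan) (c : Chan) (P : Proto At) : Prop :=
  StepsP (S.side c) (S.proto c) (p c) P

/-- `p` is a legal behaviour for the setting `S`. -/
def Setting.IsBehav (S : Setting At Chan) (p : Behav Chan) : Prop :=
  (∀ c ∉ S.active, p c = []) ∧ ∀ c ∈ S.active, ∃ P, S.Reaches p c P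

/-- An antecedent behaviour: every frontier state has flow or sink role. -/
def Setting.Antecedent (S : Setting At Chan) (p : Behav Chan) : Prop :=
  S.IsBehav p ∧ ∀ c ∈ S.active, ∀ P, S.Reaches p c P → role (S.side c) P ≠ .src

/-- A saturated behaviour: every frontier state is atomic, has sink role,
or is an output state with flow role. -/
def Setting.Saturated (S : Setting At Chan) (p : Behav Chan) : Prop :=
  S.IsBehav p ∧ ∀ c ∈ S.active, ∀ P, S.Reaches p c P →
    P.IsAtom ∨ role (S.side c) P = .snk ∨
      (expects (S.side c) P = some Dir.out ∧ role (S.side c) P = .flow)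

/-- `p ⊑ q`: componentwise prefix of behaviours. -/
def BPrefix (p q : Behav Chan) : Prop := ∀ c, p c <+: q c

/-- `p ⊑_i q`: `p` is a prefix of `q` and all intervening events are inputs. -/
def BPrefixI (p q : Behav Chan) : Prop :=
  ∀ c, ∃ r : List Ev, q c = p c ++ r ∧ ∀ e ∈ r, e.1 = Dir.inp

/-- Compatibility `p ⌣ q` of behaviours. -/
def Compat (p q : Behav Chan) : Prop := ∀ c, p c <+: q c ∨ q c <+: p c

/-- The join `p ⊔ q` of (compatible) behaviours: the longer component on each
channel. -/
def bjoin (p q : Behav Chan) : Behav Chan :=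
  fun c => if (p c).length ≤ (q c).length then q c else p c

/-- The empty behaviour. -/
def emptyB : Behav Chan := fun _ => []

/-- `p * e` on channel `c`: append the event `e` at the end of the channel
behaviour of `c`. -/
def bapp [DecidableEq Chan] (p : Behav Chan) (c : Chan) (e : Ev) : Behav Chan :=
  Function.update p c (p c ++ [e])

/-- `e * p` on channel `c`: prepend the event `e` at the beginning of the
channel behaviour of `c`. -/
def bpre [DecidableEq Chan] (c : Chan) (e : Ev) (p : Behav Chan) : Behav Chan :=
  Function.update p c (e :: p c)

/-- The conclusion of an entailment: an output event `ᾱ[a]` or an atomic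
morphism. -/
inductive Concl (Chan M : Type) : Type where
  | out : Chan → ℕ → Concl Chan M
  | mor : M → Concl Chan M

/-- An entailment: an antecedent behaviour together with a conclusion. -/
abbrev Ent (Chan M : Type) : Type := Behav Chan × Concl Chan M

/-- The event `e` is a legal next event on channel `c` given the behaviour
`p`. -/
def Setting.CanStep (S : Setting At Chan) (p : Behav Chan) (c : Chan) (e : Ev) : Prop :=
  ∃ P P', S.Reaches p c P ∧ StepP (S.side c) P e P'

/-- Validity of an entailment: the antecedent is an antecedent behaviour and
the conclusion is a legal output event, resp. an atomic morphism on the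
(all-atomic) frontier. -/
def Setting.ValidEnt (S : Setting At Chan) : Ent Chan M → Prop
  | (p, .out α a) => S.Antecedent p ∧ α ∈ S.active ∧ S.CanStep p α (Dir.out, a)
  | (p, .mor _) => S.Antecedent p ∧ ∀ c ∈ S.active, ∃ A, S.Reaches p c (.atom A)

/-- A set of entailments. -/
def EntSet (S : Setting At Chan) (Q : Set (Ent Chan M)) : Prop :=
  ∀ e ∈ Q, S.ValidEnt e

/-- All output events occurring in `p` are `Q`-justified. -/
def Justified [DecidableEq Chan] (S : Setting At Chan) (Q : Set (Ent Chan M))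
    (p : Behav Chan) : Prop :=
  ∀ c ∈ S.active, ∀ (l : List Ev) (a : ℕ) (r : List Ev), p c = l ++ (Dir.out, a) :: r →
    ∃ u : Behav Chan, (u, Concl.out c a) ∈ Q ∧ u c = l ∧ BPrefix (bapp u c (Dir.out, a)) p

/-- A `Q`-preantecedent: a `Q`-justified antecedent behaviour. -/
def Preant [DecidableEq Chan] (S : Setting At Chan) (Q : Set (Ent Chan M))
    (p : Behav Chan) : Prop :=
  S.Antecedent p ∧ Justified S Q p

/-- A `Q`-antecedent: the antecedent of some entailment of `Q`. -/
def QAnt (Q : Set (Ent Chan M)) (p : Behav Chan) : Prop := ∃ x, (p, x) ∈ Q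

section EP

variable [DecidableEq Chan]

/-- EP-1: every `Q`-antecedent is `Q`-justified. -/
def EP1 (S : Setting At Chan) (Q : Set (Ent Chan M)) : Prop :=
  ∀ p, QAnt Q p → Justified S Q p

/-- EP-2: compatible entailments with equal channel behaviour on the output
channel conclude the same output event. -/
def EP2 (Q : Set (Ent Chan M)) : Prop :=
  ∀ (p q : Behav Chan) (α : Chan) (a b : ℕ),
    (p, Concl.out α a) ∈ Q → (q, Concl.out α b) ∈ Q → p α = q α → Compat p q → a = b

/-- EP-3: between a preantecedent and a saturated preantecedent above it along
inputs there is a `Q`-antecedent. -/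
def EP3 (S : Setting At Chan) (Q : Set (Ent Chan M)) : Prop :=
  ∀ p q, Preant S Q p → Preant S Q q → S.Saturated q → BPrefixI p q →
    ∃ p', QAnt Q p' ∧ BPrefixI p p' ∧ BPrefixI p' q

/-- EP-4. -/
def EP4 (Q : Set (Ent Chan M)) : Prop :=
  ∀ (α β : Chan) (a b : ℕ) (p q : Behav Chan), α ≠ β →
    (p, Concl.out α a) ∈ Q → (q, Concl.out β b) ∈ Q → p α = q α → BPrefix p q →
    (bapp q α (Dir.out, a), Concl.out β b) ∈ Q

/-- EP-5. -/
def EP5 (S : Setting At Chan) (Q : Set (Ent Chan M)) : Prop :=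
  ∀ (α β : Chan) (a b : ℕ) (p : Behav Chan), α ≠ β →
    (p, Concl.out α a) ∈ Q → β ∈ S.active → S.CanStep p β (Dir.inp, b) →
    (bapp p β (Dir.inp, b), Concl.out α a) ∈ Q

/-- EP-6. -/
def EP6 (Q : Set (Ent Chan M)) : Prop :=
  ∀ (α β : Chan) (a b : ℕ) (p : Behav Chan), α ≠ β →
    (bapp p β (Dir.out, b), Concl.out α a) ∈ Q → (p, Concl.out α a) ∈ Q

/-- EP-7. -/
def EP7 (S : Setting At Chan) (Q : Set (Ent Chan M)) : Prop :=
  ∀ (α β : Chan) (a : ℕ) (p : Behav Chan), α ≠ β → Preant S Q p → β ∈ S.active →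
    (∃ b, S.CanStep p β (Dir.inp, b)) →
    (∀ b, S.CanStep p β (Dir.inp, b) → (bapp p β (Dir.inp, b), Concl.out α a) ∈ Q) →
    (p, Concl.out α a) ∈ Q

/-- A proto-process: a set of entailments satisfying EP-1, EP-2 and EP-3. -/
def ProtoProcess (S : Setting At Chan) (Q : Set (Ent Chan M)) : Prop :=
  EntSet S Q ∧ EP1 S Q ∧ EP2 Q ∧ EP3 S Q

/-- An extensional process: a set of entailments satisfying EP-1 – EP-7. -/
def ExtProcess (S : Setting At Chan) (Q : Set (Ent Chan M)) : Prop :=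
  ProtoProcess S Q ∧ EP4 Q ∧ EP5 S Q ∧ EP6 Q ∧ EP7 S Q

end EP



section Aux

variable {At Chan M : Type}

lemma steps_append {s : Side} {P P₂ : Proto At} {l₁ l₂ : List Ev}
    (h : StepsP s P (l₁ ++ l₂) P₂) : ∃ P₁, StepsP s P l₁ P₁ ∧ StepsP s P₁ l₂ P₂ := by
  induction l₁ generalizing P with
  | nil => exact ⟨P, .nil P, h⟩
  | cons e l ih =>
    cases h with
    | cons h1 h2 =>
      obtain ⟨P₁, ha, hb⟩ := ih h2
      exact ⟨P₁, .cons h1 ha, hb⟩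

lemma prefix_of_prefix_of_le {l₁ l₂ l₃ : List Ev} (h1 : l₁ <+: l₃) (h2 : l₂ <+: l₃)
    (h : l₁.length ≤ l₂.length) : l₁ <+: l₂ := by
  obtain ⟨t, rfl⟩ := h2
  obtain ⟨u, hu⟩ := h1
  rcases List.prefix_or_prefix_of_prefix (l₁ := l₁) (l₂ := l₂) ⟨u, hu⟩ ⟨t, rfl⟩ with h' | h'
  · exact h'
  · exact (h'.eq_of_length (le_antisymm h'.length_le h)).symm ▸ List.prefix_refl _

/-- total size of a behaviour -/
noncomputable def bsize (S : Setting At Chan) (p : Behav Chan) : ℕ :=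
  S.finite.toFinset.sum fun c => (p c).length

lemma bsize_mono {S : Setting At Chan} {p q : Behav Chan} (h : BPrefix p q) :
    bsize S p ≤ bsize S q :=
  Finset.sum_le_sum fun c _ => (h c).length_le

lemma bsize_lt {S : Setting At Chan} {p q : Behav Chan} (h : BPrefix p q)
    {β : Chan} (hβ : β ∈ S.active) (hne : p β ≠ q β) : bsize S p < bsize S q := by
  refine Finset.sum_lt_sum (fun c _ => (h c).length_le) ⟨β, S.finite.mem_toFinset.mpr hβ, ?_⟩
  exact lt_of_le_of_ne (h β).length_le fun hl => hne ((h β).eq_of_length hl)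

lemma bapp_self [DecidableEq Chan] (p : Behav Chan) (c : Chan) (e : Ev) :
    bapp p c e c = p c ++ [e] := by simp [bapp]

lemma bapp_other [DecidableEq Chan] (p : Behav Chan) (c : Chan) (e : Ev) {c' : Chan}
    (h : c' ≠ c) : bapp p c e c' = p c' := Function.update_of_ne h _ _

lemma bprefix_bapp [DecidableEq Chan] {p q : Behav Chan} {β : Chan} {e : Ev}
    (h : BPrefix p q) (hβ : p β ++ [e] <+: q β) : BPrefix (bapp p β e) q := by
  intro c
  by_cases hc : c = β
  · subst hc; rw [bapp_self]; exact hβ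
  · rw [bapp_other _ _ _ hc]; exact h c

lemma isBehav_of_prefix {S : Setting At Chan} {p q : Behav Chan}
    (hq : S.IsBehav q) (h : BPrefix p q) : S.IsBehav p := by
  constructor
  · intro c hc
    have := h c
    rw [hq.1 c hc] at this
    exact List.prefix_nil.mp this
  · intro c hc
    obtain ⟨P, hP⟩ := hq.2 c hc
    obtain ⟨t, ht⟩ := h c
    simp only [Setting.Reaches] at hP
    rw [← ht] at hP
    obtain ⟨P₁, h₁, _⟩ := steps_append hP
    exact ⟨P₁, h₁⟩

end Aux

section Main

variable {At Chan M : Type} [DecidableEq Chan]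

lemma do_it_before_aux (S : Setting At Chan) (Q : Set (Ent Chan M))
    (hQ : EntSet S Q) (h1 : EP1 S Q) (h4 : EP4 Q) (h5 : EP5 S Q) :
    ∀ (n : ℕ) (p q : Behav Chan) (α : Chan) (a : ℕ),
      bsize S q * bsize S q + (bsize S q - bsize S p) = n →
      (p, Concl.out α a) ∈ Q → Preant S Q q → BPrefix p q → p α = q α →
      (q, Concl.out α a) ∈ Q := by
  intro n
  induction n using Nat.strong_induction_on with
  | _ n IH =>
  intro p q α a hn hpQ hq hpq hα
  obtain ⟨hpA, hαact, -⟩ : S.Antecedent p ∧ α ∈ S.active ∧ S.CanStep p α (Dir.out, a) :=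
    hQ _ hpQ
  by_cases heq : ∀ c ∈ S.active, p c = q c
  · have : p = q := by
      funext c
      by_cases hc : c ∈ S.active
      · exact heq c hc
      · rw [hpA.1.1 c hc, hq.1.1.1 c hc]
    exact this ▸ hpQ
  push_neg at heq
  obtain ⟨β, hβact, hβne⟩ := heq
  have hβα : β ≠ α := fun h => hβne (by rw [h, hα])
  obtain ⟨t, ht⟩ := hpq β
  match t, ht with
  | [], ht => exact absurd (by rw [← ht, List.append_nil]) hβne
  | (d, b) :: r, ht =>
  -- q β = p β ++ (d,b) :: r
  obtain ⟨Pq, hPq⟩ := hq.1.1.2 β hβact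
  simp only [Setting.Reaches] at hPq
  rw [← ht] at hPq
  obtain ⟨P₁, hs1, hs2⟩ := steps_append hPq
  have hcan : S.CanStep p β (d, b) := by
    cases hs2 with
    | cons hstep _ => exact ⟨P₁, _, hs1, hstep⟩
  have hq_size_pos : bsize S p < bsize S q := bsize_lt hpq hβact hβne
  cases d with
  | inp =>
    -- EP-5 step
    have hQ' : (bapp p β (Dir.inp, b), Concl.out α a) ∈ Q :=
      h5 α β a b p (Ne.symm hβα) hpQ hβact hcan
    have hpref : BPrefix (bapp p β (Dir.inp, b)) q :=
      bprefix_bapp hpq ⟨r, by rw [← ht, List.append_assoc]; rfl⟩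
    have hsz : bsize S (bapp p β (Dir.inp, b)) ≤ bsize S q := bsize_mono hpref
    have hsz2 : bsize S p < bsize S (bapp p β (Dir.inp, b)) := by
      refine bsize_lt (fun c => ?_) hβact (by rw [bapp_self]; simp)
      by_cases hc : c = β
      · subst hc; rw [bapp_self]; exact ⟨[(Dir.inp, b)], rfl⟩
      · rw [bapp_other _ _ _ hc]
    refine IH _ ?_ _ _ _ _ rfl hQ' hq hpref (by rw [bapp_other _ _ _ (Ne.symm hβα), hα])
    subst hn
    omega
  | out =>
    -- justified output step
    obtain ⟨u, huQ, huβ, huapp⟩ := hq.2 β hβact (p β) b r ht.symm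
    have huA : S.Antecedent u := (hQ _ huQ).1
    have hu_q : BPrefix u q := by
      intro c
      refine List.IsPrefix.trans ?_ (huapp c)
      by_cases hc : c = β
      · subst hc; rw [bapp_self]; exact ⟨[(Dir.out, b)], rfl⟩
      · rw [bapp_other _ _ _ hc]
    set m : Behav Chan := bjoin p u with hm
    have hmdef : ∀ c, m c = p c ∨ m c = u c := by
      intro c
      by_cases h : (p c).length ≤ (u c).length
      · right; simp [hm, bjoin, h]
      · left; simp [hm, bjoin, h]
    have hpm : BPrefix p m := by
      intro c
      by_cases h : (p c).length ≤ (u c).length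
      · simp only [hm, bjoin, if_pos h]
        exact prefix_of_prefix_of_le (hpq c) (hu_q c) h
      · simp only [hm, bjoin, if_neg h]
        exact List.prefix_refl _
    have hum : BPrefix u m := by
      intro c
      by_cases h : (p c).length ≤ (u c).length
      · simp only [hm, bjoin, if_pos h]
        exact List.prefix_refl _
      · simp only [hm, bjoin, if_neg h]
        exact prefix_of_prefix_of_le (hu_q c) (hpq c) (le_of_not_ge h)
    have hmq : BPrefix m q := by
      intro c
      rcases hmdef c with h | h <;> rw [h]
      · exact hpq c
      · exact hu_q c
    have hmβ : m β = p β := by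
      simp [hm, bjoin, huβ]
    have hmα : m α = p α := by
      rcases hmdef α with h | h
      · exact h
      · rw [h]
        have hup : u α <+: p α := by
          rw [hα]; exact hu_q α
        rcases hmdef α with h' | h'
        · rw [h] at h'; exact h' ▸ rfl
        · by_cases hl : (p α).length ≤ (u α).length
          · exact hup.eq_of_length (le_antisymm hup.length_le hl)
          · exfalso
            have : m α = p α := by simp [hm, bjoin, hl]
            rw [h] at this
            exact hl (this ▸ le_refl _)
    have hmA : S.Antecedent m := by
      constructor
      · exact isBehav_of_prefix hq.1.1 hmq
      · intro c hc P hP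
        rcases hmdef c with h | h
        · exact hpA.2 c hc P (by rwa [Setting.Reaches, ← h])
        · exact huA.2 c hc P (by rwa [Setting.Reaches, ← h])
    have hmJ : Justified S Q m := by
      intro c hc l a' r' hsplit
      rcases hmdef c with h | h
      · obtain ⟨w, hwQ, hwc, hwp⟩ := h1 p ⟨_, hpQ⟩ c hc l a' r' (h ▸ hsplit)
        exact ⟨w, hwQ, hwc, fun c' => (hwp c').trans (hpm c')⟩
      · obtain ⟨w, hwQ, hwc, hwp⟩ := h1 u ⟨_, huQ⟩ c hc l a' r' (h ▸ hsplit)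
        exact ⟨w, hwQ, hwc, fun c' => (hwp c').trans (hum c')⟩
    have hm_pre : Preant S Q m := ⟨hmA, hmJ⟩
    have hmq_lt : bsize S m < bsize S q :=
      bsize_lt hmq hβact (by rw [hmβ]; exact hβne)
    -- recursive call: (m, out α a) ∈ Q
    have hmeas1 : bsize S m * bsize S m + (bsize S m - bsize S p) < n := by
      subst hn
      have h1' : bsize S m - bsize S p ≤ bsize S m := Nat.sub_le _ _
      have h2' : bsize S m + 1 ≤ bsize S q := hmq_lt
      calc bsize S m * bsize S m + (bsize S m - bsize S p)
          ≤ bsize S m * bsize S m + bsize S m := by omega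
        _ < bsize S q * bsize S q := by nlinarith
        _ ≤ bsize S q * bsize S q + (bsize S q - bsize S p) := Nat.le_add_right _ _
    have hmQ : (m, Concl.out α a) ∈ Q :=
      IH _ hmeas1 p m α a rfl hpQ hm_pre hpm hmα.symm
    -- EP-4
    have hstep2 : (bapp m β (Dir.out, b), Concl.out α a) ∈ Q :=
      h4 β α b a u m hβα huQ hmQ (by rw [huβ, hmβ]) hum
    -- final recursive call
    have hpref2 : BPrefix (bapp m β (Dir.out, b)) q := by
      refine bprefix_bapp hmq ?_
      rw [hmβ]
      exact ⟨r, by rw [← ht, List.append_assoc]; rfl⟩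
    have hsz2 : bsize S m < bsize S (bapp m β (Dir.out, b)) := by
      refine bsize_lt (fun c => ?_) hβact (by rw [bapp_self]; simp)
      by_cases hc : c = β
      · subst hc; rw [bapp_self]; exact ⟨[(Dir.out, b)], rfl⟩
      · rw [bapp_other _ _ _ hc]
    have hszm : bsize S p ≤ bsize S m := bsize_mono hpm
    have hszq : bsize S (bapp m β (Dir.out, b)) ≤ bsize S q := bsize_mono hpref2
    refine IH _ ?_ _ _ _ _ rfl hstep2 hq hpref2
      (by rw [bapp_other _ _ _ (Ne.symm hβα), hmα, hα])
    subst hn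
    omega

end Main

theorem do_it_before {At Chan M : Type} [DecidableEq Chan]
    (S : Setting At Chan) (Q : Set (Ent Chan M))
    (hQ : EntSet S Q) (h1 : EP1 S Q) (h4 : EP4 Q) (h5 : EP5 S Q) :
    ∀ (p q : Behav Chan) (α : Chan) (a : ℕ),
      (p, Concl.out α a) ∈ Q → Preant S Q q → BPrefix p q → p α = q α →
      (q, Concl.out α a) ∈ Q := by
  intro p q α a hpQ hq hpq hα
  exact do_it_before_aux S Q hQ h1 h4 h5 _ p q α a rfl hpQ hq hpq hα

end Stmt10
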